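/- (Mellin representation of the Barnes multiple zeta function.) Let N be a positive natural number, x a complex number with Re(x) > 0, and s a complex number with Re(s) > N. Then Σ over all N-tuples (m₁,…,m_N) of natural numbers of (x + m₁ + ⋯ + m_N)^{-s} equals (1/Γ(s)) · ∫_0^∞ t^{s-1} e^{-xt} (1 - e^{-t})^{-N} dt. -/

import Mathlib

open Complex MeasureTheory

section Helpers
open Set Filter


private lemma intA {a c : ℝ} (ha : 0 < a) (hc : 0 < c) :
    IntegrableOn (fun t : ℝ ↦ t ^ (a - 1) * Real.exp (-c * t)) (Ioi 0) := by
  have := integrableOn_rpow_mul_exp_neg_mul_rpow (p := 1) (s := a - 1) (b := c)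
    (by linarith) one_pos hc
  simpa [Real.rpow_one] using this

private lemma measB {s z : ℂ} :
    AEStronglyMeasurable (fun t : ℝ ↦ (t : ℂ) ^ (s - 1) * Complex.exp (z * t))
      (volume.restrict (Ioi 0)) := by
  refine (ContinuousOn.mul ?_ (Continuous.continuousOn (by fun_prop))).aestronglyMeasurable
    measurableSet_Ioi
  intro t ht
  exact ((Complex.continuous_ofReal.continuousAt.cpow continuousAt_const
    (Or.inl (by simpa using ht))).continuousWithinAt)

private lemma normB {s z : ℂ} {t : ℝ} (ht : 0 < t) :
    ‖(t : ℂ) ^ (s - 1) * Complex.exp (z * t)‖ = t ^ (s.re - 1) * Real.exp (z.re * t) := by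
  rw [norm_mul, Complex.norm_exp,
    Complex.norm_cpow_eq_rpow_re_of_pos ht]
  simp [Complex.sub_re]

private lemma intB1 {s z : ℂ} (hs : 0 < s.re) (hz : 0 < z.re) :
    IntegrableOn (fun t : ℝ ↦ (t : ℂ) ^ (s - 1) * Complex.exp (-z * t)) (Ioi 0) := by
  refine (intA hs hz).integrable.mono' measB ?_
  filter_upwards [ae_restrict_mem measurableSet_Ioi] with t ht
  rw [normB ht]
  simp [neg_mul, Complex.neg_re]


private lemma measB' {s z : ℂ} :
    AEStronglyMeasurable (fun t : ℝ ↦ (t : ℂ) ^ (s - 1) * (Complex.exp (z * t) * (-t : ℂ)))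
      (volume.restrict (Ioi 0)) := by
  refine (ContinuousOn.mul ?_ (Continuous.continuousOn (by fun_prop))).aestronglyMeasurable
    measurableSet_Ioi
  intro t ht
  exact ((Complex.continuous_ofReal.continuousAt.cpow continuousAt_const
    (Or.inl (by simpa using ht))).continuousWithinAt)

set_option maxHeartbeats 1000000 in
private lemma diffB {s : ℂ} (hs : 0 < s.re) :
    DifferentiableOn ℂ
      (fun z : ℂ ↦ ∫ t in Ioi (0 : ℝ), (t : ℂ) ^ (s - 1) * Complex.exp (-z * t))
      {z : ℂ | 0 < z.re} := by
  intro z₀ hz₀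
  have hz₀' : 0 < z₀.re := hz₀
  set ε := z₀.re / 2 with hε
  have hεpos : 0 < ε := by positivity
  have hmeas : ∀ᶠ z in nhds z₀, AEStronglyMeasurable
      (fun t : ℝ ↦ (t : ℂ) ^ (s - 1) * Complex.exp (-z * t)) (volume.restrict (Ioi 0)) :=
    Eventually.of_forall fun z ↦ measB
  have hint : Integrable (fun t : ℝ ↦ (t : ℂ) ^ (s - 1) * Complex.exp (-z₀ * t))
      (volume.restrict (Ioi 0)) := intB1 hs hz₀'
  have hmeas' : AEStronglyMeasurable
      (fun t : ℝ ↦ (t : ℂ) ^ (s - 1) * (Complex.exp (-z₀ * t) * (-t : ℂ)))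
      (volume.restrict (Ioi 0)) := measB'
  have hbound : ∀ᵐ (t : ℝ) ∂(volume.restrict (Ioi 0)), ∀ z ∈ Metric.ball z₀ ε,
      ‖(t : ℂ) ^ (s - 1) * (Complex.exp (-z * t) * (-t : ℂ))‖
        ≤ t ^ (s.re + 1 - 1) * Real.exp (-ε * t) := by
    filter_upwards [ae_restrict_mem measurableSet_Ioi] with t ht z hz
    have hzre : ε ≤ z.re := by
      have h1 := Complex.abs_re_le_norm (z - z₀)
      have hd : ‖z - z₀‖ < ε := by
        rw [← Complex.dist_eq]; simpa [Metric.mem_ball] using hz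
      simp only [Complex.sub_re] at h1
      have h2 : |z.re - z₀.re| < ε := lt_of_le_of_lt h1 hd
      have h3 := abs_lt.mp h2
      simp only [hε] at h3 ⊢
      linarith [h3.1]
    rw [norm_mul, norm_mul]
    have h1 : ‖(t : ℂ) ^ (s - 1)‖ = t ^ (s.re - 1) := by
      rw [Complex.norm_cpow_eq_rpow_re_of_pos ht]; simp
    have h2 : ‖Complex.exp (-z * t)‖ = Real.exp (-z.re * t) := by
      rw [Complex.norm_exp]; simp
    have h3 : ‖(-t : ℂ)‖ = t := by simp [abs_of_pos (show (0:ℝ) < t from ht)]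
    rw [h1, h2, h3]
    have h4 : t ^ (s.re + 1 - 1) = t ^ (s.re - 1) * t := by
      rw [show s.re + 1 - 1 = (s.re - 1) + 1 by ring, Real.rpow_add ht, Real.rpow_one]
    rw [h4]
    have h5 : Real.exp (-z.re * t) ≤ Real.exp (-ε * t) := by
      apply Real.exp_le_exp.mpr
      nlinarith [mul_le_mul_of_nonneg_right hzre ht.le]
    calc t ^ (s.re - 1) * (Real.exp (-z.re * t) * t)
        = t ^ (s.re - 1) * t * Real.exp (-z.re * t) := by ring
      _ ≤ t ^ (s.re - 1) * t * Real.exp (-ε * t) := by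
          exact mul_le_mul_of_nonneg_left h5 (mul_nonneg (Real.rpow_nonneg ht.le _) ht.le)
      _ = t ^ (s.re - 1) * t * Real.exp (-ε * t) := rfl
  have hbint : Integrable (fun t : ℝ ↦ t ^ (s.re + 1 - 1) * Real.exp (-ε * t))
      (volume.restrict (Ioi 0)) := (intA (by linarith : (0:ℝ) < s.re + 1) hεpos).integrable
  have hderiv : ∀ᵐ (t : ℝ) ∂(volume.restrict (Ioi 0)), ∀ z ∈ Metric.ball z₀ ε,
      HasDerivAt (fun z : ℂ ↦ (t : ℂ) ^ (s - 1) * Complex.exp (-z * t))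
        ((t : ℂ) ^ (s - 1) * (Complex.exp (-z * t) * (-t : ℂ))) z := by
    filter_upwards with t z hz
    have h : HasDerivAt (fun z : ℂ ↦ -z * t) (-t : ℂ) z := by
      simpa using ((hasDerivAt_id z).neg.mul_const (t : ℂ))
    exact (h.cexp).const_mul _
  have key := hasDerivAt_integral_of_dominated_loc_of_deriv_le (Metric.ball_mem_nhds z₀ hεpos) hmeas hint hmeas'
    hbound hbint hderiv
  exact key.2.differentiableAt.differentiableWithinAt

set_option maxHeartbeats 1000000 in
private lemma gammaB {s : ℂ} (hs : 0 < s.re) {z : ℂ} (hz : 0 < z.re) :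
    ∫ t in Ioi (0 : ℝ), (t : ℂ) ^ (s - 1) * Complex.exp (-z * t)
      = Complex.Gamma s * z ^ (-s) := by
  set U : Set ℂ := {z : ℂ | 0 < z.re} with hU
  have hUopen : IsOpen U := isOpen_lt continuous_const Complex.continuous_re
  have hUpre : IsPreconnected U := (convex_halfSpace_re_gt 0).isPreconnected
  set f : ℂ → ℂ := fun z ↦ ∫ t in Ioi (0 : ℝ), (t : ℂ) ^ (s - 1) * Complex.exp (-z * t)
  set g : ℂ → ℂ := fun z ↦ Complex.Gamma s * z ^ (-s)
  have hf : AnalyticOnNhd ℂ f U := (diffB hs).analyticOnNhd hUopen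
  have hg : AnalyticOnNhd ℂ g U := by
    apply DifferentiableOn.analyticOnNhd _ hUopen
    intro w hw
    refine ((differentiableAt_id.cpow (differentiableAt_const _) ?_).const_mul
      _).differentiableWithinAt
    exact Or.inl hw
  have heq : ∀ r : ℝ, 0 < r → f r = g r := by
    intro r hr
    have h1 := Complex.integral_cpow_mul_exp_neg_mul_Ioi hs hr
    have harg : ((r : ℂ)).arg ≠ Real.pi := by
      rw [Complex.arg_ofReal_of_nonneg hr.le]; exact Real.pi_ne_zero.symm
    have h2 : ((1 : ℂ) / r) ^ s = (r : ℂ) ^ (-s) := by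
      rw [one_div, Complex.inv_cpow _ _ harg, ← Complex.cpow_neg]
    simp only [f, g]
    simp_rw [neg_mul]
    rw [h1, h2]
    ring
  have htend : Filter.Tendsto (fun n : ℕ ↦ ((1 + ((n : ℝ) + 1)⁻¹ : ℝ) : ℂ)) Filter.atTop
      (nhdsWithin 1 {(1 : ℂ)}ᶜ) := by
    rw [tendsto_nhdsWithin_iff]
    constructor
    · have h0 : Filter.Tendsto (fun n : ℕ ↦ (1 + ((n : ℝ) + 1)⁻¹ : ℝ)) Filter.atTop (nhds 1) := by
        simpa using tendsto_const_nhds.add ((tendsto_one_div_add_atTop_nhds_zero_nat (𝕜 := ℝ)).congr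
          (fun n ↦ by simp [one_div]))
      have := (Complex.continuous_ofReal.tendsto 1).comp h0
      exact this.congr (fun n ↦ by simp [Function.comp])
    · filter_upwards with n
      simp only [Set.mem_compl_iff, Set.mem_singleton_iff]
      intro hcl
      rw [show (1 : ℂ) = ((1 : ℝ) : ℂ) by norm_num, Complex.ofReal_inj] at hcl
      have hpos : (0 : ℝ) < ((n : ℝ) + 1)⁻¹ := by positivity
      linarith [hcl]
  have hfreq : ∃ᶠ w in nhdsWithin 1 {(1 : ℂ)}ᶜ, f w = g w := by
    apply htend.frequently
    apply Filter.Frequently.of_forall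
    intro n
    exact heq _ (by positivity)
  have h1U : (1 : ℂ) ∈ U := by simp [hU]
  exact hf.eqOn_of_preconnected_of_frequently_eq hg hUpre h1U hfreq hz

set_option maxHeartbeats 1000000 in
private lemma summable_pi_prod {f : ℕ → ℝ} (h0 : ∀ k, 0 ≤ f k) (hf : Summable f) (n : ℕ) :
    Summable (fun m : Fin n → ℕ ↦ ∏ j, f (m j)) := by
  induction n with
  | zero => exact Summable.of_finite
  | succ n IH =>
    have hs2 := Summable.mul_of_nonneg (g := fun m : Fin n → ℕ ↦ ∏ j, f (m j)) hf IH h0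
      (fun m ↦ Finset.prod_nonneg fun j _ ↦ h0 _)
    have h3 : Summable ((fun m : Fin (n + 1) → ℕ ↦ ∏ j, f (m j))
        ∘ (Fin.consEquiv (fun _ : Fin (n + 1) ↦ ℕ))) :=
      hs2.congr (fun p ↦ by simp [Fin.prod_univ_succ])
    exact (Fin.consEquiv (fun _ : Fin (n + 1) ↦ ℕ)).summable_iff.mp h3

set_option maxHeartbeats 1000000 in
private lemma hasSum_pi_prod {f : ℕ → ℂ} (hf : Summable fun k ↦ ‖f k‖) (n : ℕ) :
    HasSum (fun m : Fin n → ℕ ↦ ∏ j, f (m j)) ((∑' k, f k) ^ n) := by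
  induction n with
  | zero =>
    have h : HasSum (fun m : Fin 0 → ℕ ↦ ∏ j, f (m j)) ((fun m : Fin 0 → ℕ ↦ ∏ j, f (m j))
        (default)) := hasSum_single _ (fun b hb ↦ absurd (Subsingleton.elim b default) hb)
    simpa using h
  | succ n IH =>
    have hnorm : Summable fun m : Fin n → ℕ ↦ ‖∏ j, f (m j)‖ := by
      have h := summable_pi_prod (fun k ↦ norm_nonneg (f k)) hf n
      exact h.congr (fun m ↦ by rw [norm_prod])
    have hsm := summable_mul_of_summable_norm (f := f)
      (g := fun m : Fin n → ℕ ↦ ∏ j, f (m j)) hf hnorm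
    have hmul := HasSum.mul (g := fun m : Fin n → ℕ ↦ ∏ j, f (m j))
      (hf.of_norm.hasSum) IH hsm
    have h3 : HasSum ((fun m : Fin (n + 1) → ℕ ↦ ∏ j, f (m j))
        ∘ (Fin.consEquiv (fun _ : Fin (n + 1) ↦ ℕ))) ((∑' k, f k) * (∑' k, f k) ^ n) :=
      hmul.congr_fun (fun p ↦ by simp [Fin.prod_univ_succ])
    rw [pow_succ, mul_comm]
    exact (Fin.consEquiv (fun _ : Fin (n + 1) ↦ ℕ)).hasSum_iff.mp h3

set_option maxHeartbeats 1000000 in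
private lemma barnes_summable {c σ : ℝ} (hc : 0 < c) {N : ℕ} (hN : 0 < N)
    (hσ : (N : ℝ) < σ) :
    Summable (fun m : Fin N → ℕ ↦ (c + ∑ j, (m j : ℝ)) ^ (-σ)) := by
  have hσ0 : 0 < σ := lt_of_le_of_lt (by exact_mod_cast Nat.zero_le N) hσ
  set p := σ / N with hp
  have hp1 : 1 < p := (one_lt_div (by exact_mod_cast hN)).mpr hσ
  have hp0 : 0 < p := lt_trans one_pos hp1
  -- the dominating summable function
  have hg : Summable (fun k : ℕ ↦ ((k : ℝ) + 1) ^ (-p)) := by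
    have h1 : Summable (fun k : ℕ ↦ (((k : ℝ)) ^ p)⁻¹) := Real.summable_nat_rpow_inv.mpr hp1
    have h2 := (summable_nat_add_iff 1).mpr h1
    refine h2.congr fun k ↦ ?_
    rw [Real.rpow_neg (by positivity)]
    push_cast
    ring_nf
  have hg0 : ∀ k : ℕ, (0 : ℝ) ≤ ((k : ℝ) + 1) ^ (-p) := fun k ↦ Real.rpow_nonneg (by positivity) _
  have hbig := summable_pi_prod hg0 hg N
  set C := (min c 1) ^ (-σ) with hC
  have hminc : 0 < min c 1 := lt_min hc one_pos
  refine Summable.of_nonneg_of_le (fun m ↦ Real.rpow_nonneg (by positivity) _) (fun m ↦ ?_)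
    (hbig.mul_left C)
  set S := ∑ j, ((m j : ℝ)) with hS
  have hS0 : 0 ≤ S := Finset.sum_nonneg fun j _ ↦ Nat.cast_nonneg _
  have h1 : min c 1 * (1 + S) ≤ c + S := by
    have h := min_le_left c 1
    have h' := min_le_right c 1
    nlinarith
  have h2 : (c + S) ^ (-σ) ≤ (min c 1 * (1 + S)) ^ (-σ) :=
    Real.rpow_le_rpow_of_nonpos (by positivity) h1 (by linarith)
  have h3 : (min c 1 * (1 + S)) ^ (-σ) = C * (1 + S) ^ (-σ) := by
    rw [Real.mul_rpow hminc.le (by positivity)]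
  have h4 : (1 + S) ^ (-σ) ≤ ∏ j, ((m j : ℝ) + 1) ^ (-p) := by
    have hprod_pos : (0 : ℝ) < ∏ j, ((m j : ℝ) + 1) :=
      Finset.prod_pos fun j _ ↦ by positivity
    have hle : ∏ j, ((m j : ℝ) + 1) ≤ (1 + S) ^ N := by
      have h := Finset.prod_le_prod (s := Finset.univ) (f := fun j : Fin N ↦ (m j : ℝ) + 1)
        (g := fun _ : Fin N ↦ 1 + S) (fun j _ ↦ by positivity) (fun j _ ↦ ?_)
      · simpa [Finset.prod_const, Finset.card_univ] using h
      · have : (m j : ℝ) ≤ S := Finset.single_le_sum (f := fun j : Fin N ↦ ((m j : ℝ)))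
          (fun i _ ↦ Nat.cast_nonneg _) (Finset.mem_univ j)
        show (m j : ℝ) + 1 ≤ 1 + S
        linarith
    have h5 : ((1 + S) ^ N) ^ (-p) ≤ (∏ j, ((m j : ℝ) + 1)) ^ (-p) :=
      Real.rpow_le_rpow_of_nonpos hprod_pos hle (by linarith)
    have h6 : ((1 + S) ^ N) ^ (-p) = (1 + S) ^ (-σ) := by
      rw [← Real.rpow_natCast (1 + S) N, ← Real.rpow_mul (by positivity)]
      congr 1
      rw [hp]
      field_simp
    have h7 : (∏ j, ((m j : ℝ) + 1)) ^ (-p) = ∏ j, ((m j : ℝ) + 1) ^ (-p) :=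
      (Real.finset_prod_rpow Finset.univ _ (fun j _ ↦ by positivity) _).symm
    rw [← h6, ← h7]
    exact h5
  calc (c + S) ^ (-σ) ≤ (min c 1 * (1 + S)) ^ (-σ) := h2
    _ = C * (1 + S) ^ (-σ) := h3
    _ ≤ C * ∏ j, ((m j : ℝ) + 1) ^ (-p) := by
        apply mul_le_mul_of_nonneg_left h4 (Real.rpow_nonneg hminc.le _)

set_option maxHeartbeats 1000000 in
/-- **Mellin representation of the Barnes multiple zeta function.** For `N ≥ 1`,
`Re(x) > 0` and `Re(s) > N`,
`Σ_{m : Fin N → ℕ} (x + m₁ + ⋯ + m_N)^{-s}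
  = (1/Γ(s)) ∫_0^∞ t^{s-1} e^{-xt} (1 - e^{-t})^{-N} dt`. -/
theorem barnes_mellin (N : ℕ) (hN : 0 < N) (x s : ℂ) (hx : 0 < x.re)
    (hs : (N : ℝ) < s.re) :
    ∑' m : Fin N → ℕ, (x + ∑ j, (m j : ℂ)) ^ (-s) =
      (1 / Complex.Gamma s) *
        ∫ t in Set.Ioi (0 : ℝ),
          (t : ℂ) ^ (s - 1) * Complex.exp (-x * t) *
            (1 - Complex.exp (-(t : ℂ))) ^ (-(N : ℤ)) := by
  have hs0 : 0 < s.re := lt_of_le_of_lt (by positivity) hs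
  have hre : ∀ m : Fin N → ℕ, (x + ∑ j, (m j : ℂ)).re = x.re + ∑ j, (m j : ℝ) := by
    intro m
    have h : (∑ j, (m j : ℂ)) = (((∑ j, (m j : ℝ)) : ℝ) : ℂ) := by push_cast; ring
    rw [Complex.add_re, h, Complex.ofReal_re]
  have hrepos : ∀ m : Fin N → ℕ, 0 < (x + ∑ j, (m j : ℂ)).re := by
    intro m
    rw [hre m]
    have : (0:ℝ) ≤ ∑ j, (m j : ℝ) := Finset.sum_nonneg fun j _ ↦ Nat.cast_nonneg _
    linarith
  set F : (Fin N → ℕ) → ℝ → ℂ :=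
    fun m t ↦ (t : ℂ) ^ (s - 1) * Complex.exp (-(x + ∑ j, (m j : ℂ)) * t) with hF
  have hint : ∀ m, Integrable (F m) (volume.restrict (Ioi 0)) :=
    fun m ↦ intB1 hs0 (hrepos m)
  -- integrals of norms
  have hnormint : ∀ m, (∫ t in Ioi (0:ℝ), ‖F m t‖)
      = (1 / (x.re + ∑ j, (m j : ℝ))) ^ s.re * Real.Gamma s.re := by
    intro m
    have h1 : ∀ t ∈ Ioi (0:ℝ), ‖F m t‖
        = t ^ (s.re - 1) * Real.exp (-((x.re + ∑ j, (m j : ℝ)) * t)) := by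
      intro t ht
      rw [hF]
      simp only []
      rw [normB ht]
      congr 2
      rw [Complex.neg_re, hre m]
      ring
    rw [setIntegral_congr_fun measurableSet_Ioi h1]
    exact Real.integral_rpow_mul_exp_neg_mul_Ioi hs0 (by
      have := hrepos m; rw [hre m] at this; exact this)
  have hsum : Summable (fun m ↦ ∫ t in Ioi (0:ℝ), ‖F m t‖) := by
    have hb := (barnes_summable hx hN hs).mul_right (Real.Gamma s.re)
    refine hb.congr fun m ↦ ?_
    rw [hnormint m]
    congr 1
    have hr : (0:ℝ) < x.re + ∑ j, (m j : ℝ) := by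
      have := hrepos m; rwa [hre m] at this
    rw [one_div, Real.inv_rpow hr.le, ← Real.rpow_neg hr.le]
  have hkey := hasSum_integral_of_summable_integral_norm hint hsum
  -- pointwise sum
  have hptsum : ∀ t ∈ Ioi (0:ℝ), HasSum (fun m : Fin N → ℕ ↦ F m t)
      ((t : ℂ) ^ (s - 1) * Complex.exp (-x * t)
        * (1 - Complex.exp (-(t : ℂ))) ^ (-(N : ℤ))) := by
    intro t ht
    set w : ℂ := Complex.exp (-(t : ℂ)) with hw
    have hwnorm : ‖w‖ < 1 := by
      rw [hw, Complex.norm_exp]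
      simp only [Complex.neg_re, Complex.ofReal_re]
      exact Real.exp_lt_one_iff.mpr (by linarith [mem_Ioi.mp ht])
    have hgeo : Summable fun k : ℕ ↦ ‖w ^ k‖ := by
      refine (summable_geometric_of_lt_one (norm_nonneg w) hwnorm).congr fun k ↦ ?_
      rw [norm_pow]
    have hps := hasSum_pi_prod hgeo N
    rw [tsum_geometric_of_norm_lt_one hwnorm] at hps
    have hmul := hps.mul_left ((t : ℂ) ^ (s - 1) * Complex.exp (-x * t))
    have hfun : ∀ m : Fin N → ℕ,
        (t : ℂ) ^ (s - 1) * Complex.exp (-x * t) * ∏ j, w ^ (m j) = F m t := by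
      intro m
      have hprod : ∏ j, w ^ (m j) = Complex.exp (-(∑ j, (m j : ℂ)) * t) := by
        rw [hw]
        rw [Finset.prod_congr rfl (fun j _ ↦ (Complex.exp_nat_mul (-(t:ℂ)) (m j)).symm),
          ← Complex.exp_sum]
        congr 1
        rw [← Finset.sum_mul]
        push_cast
        ring
      rw [hF]
      simp only []
      rw [hprod, mul_assoc, ← Complex.exp_add]
      congr 2
      ring
    have hv : (1 - w)⁻¹ ^ N = (1 - w) ^ (-(N : ℤ)) := by
      rw [zpow_neg, zpow_natCast, inv_pow]
    rw [hv] at hmul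
    exact hmul.congr_fun (fun m ↦ (hfun m).symm)
  rw [setIntegral_congr_fun measurableSet_Ioi (fun t ht ↦ (hptsum t ht).tsum_eq)] at hkey
  have hval : ∀ m : Fin N → ℕ, (∫ t in Ioi (0:ℝ), F m t)
      = Complex.Gamma s * (x + ∑ j, (m j : ℂ)) ^ (-s) :=
    fun m ↦ gammaB hs0 (hrepos m)
  have h2 := hkey.congr_fun (fun m ↦ (hval m).symm)
  have h3 := h2.tsum_eq
  rw [tsum_mul_left] at h3
  have hΓ : Complex.Gamma s ≠ 0 := Complex.Gamma_ne_zero_of_re_pos hs0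
  rw [← h3]
  field_simp

end Helpers
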